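/- arXiv:2011.04630 — 5 statements merged into one kernel-verified Lean document; each statement's English description precedes it below -/
import Mathlib

section
/- For every t > 0, the integral over ℝ² of log(1/‖y‖)·(1/(4πt))·exp(−‖y‖²/(4t)) dy equals γ/2 − log(4t)/2, where γ is the Euler–Mascheroni constant. -/
open MeasureTheory Real

section Aux

open Set Filter
open scoped Topology

private theorem log_exp_integrable_aux :
    IntegrableOn (fun t : ℝ => Real.log t * Real.exp (-t)) (Ioi 0) := by
  have h := mellin_hasDerivAt_of_isBigO_rpow (E := ℂ) (a := 2) (b := 0)
    (f := fun x : ℝ => ((Real.exp (-x) : ℝ) : ℂ)) (s := 1)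
    ((Continuous.continuousOn (by continuity)).locallyIntegrableOn measurableSet_Ioi)
    ?_ (by norm_num) ?_ (by norm_num)
  · have hc := h.1
    rw [MellinConvergent] at hc
    have h2 : IntegrableOn (fun x : ℝ => ((Real.log x * Real.exp (-x) : ℝ) : ℂ)) (Ioi 0) := by
      refine hc.congr_fun (fun x hx => ?_) measurableSet_Ioi
      simp [Complex.cpow_zero, Complex.ofReal_mul, smul_eq_mul]
    have h3 := h2.re
    refine (IntegrableOn.congr_fun h3 (fun x hx => ?_) measurableSet_Ioi)
    exact (Complex.ofReal_re _).symm
  · rw [← Asymptotics.isBigO_norm_left]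
    simp_rw [Complex.norm_real,
      Asymptotics.isBigO_norm_left]
    simpa only [neg_one_mul] using (isLittleO_exp_neg_mul_rpow_atTop zero_lt_one _).isBigO
  · simp_rw [neg_zero, Real.rpow_zero]
    refine Asymptotics.isBigO_const_of_tendsto (?_ : Tendsto _ _ (𝓝 (1 : ℂ))) one_ne_zero
    rw [(by simp : (1 : ℂ) = Real.exp (-0))]
    exact (Complex.continuous_ofReal.comp
      (Real.continuous_exp.comp continuous_neg)).continuousWithinAt

private theorem integral_log_exp_aux :
    ∫ t in Ioi (0:ℝ), Real.log t * Real.exp (-t) = -Real.eulerMascheroniConstant := by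
  have hD := Complex.hasDerivAt_GammaIntegral (s := 1) (by norm_num)
  have hval : (∫ t : ℝ in Ioi 0, (t:ℂ) ^ ((1:ℂ) - 1) * (Real.log t * Real.exp (-t)))
      = ((∫ t in Ioi (0:ℝ), Real.log t * Real.exp (-t) : ℝ) : ℂ) := by
    have h1 : (∫ t : ℝ in Ioi 0, (t:ℂ) ^ ((1:ℂ) - 1) * (Real.log t * Real.exp (-t)))
        = ∫ t in Ioi (0:ℝ), ((Real.log t * Real.exp (-t) : ℝ) : ℂ) := by
      refine setIntegral_congr_fun measurableSet_Ioi (fun x hx => ?_)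
      rw [sub_self, Complex.cpow_zero, one_mul, Complex.ofReal_mul]
    rw [h1]; exact integral_ofReal
  rw [hval] at hD
  have hG : HasDerivAt Complex.Gamma
      ((∫ t in Ioi (0:ℝ), Real.log t * Real.exp (-t) : ℝ) : ℂ) 1 := by
    refine hD.congr_of_eventuallyEq ?_
    have hopen : IsOpen {s : ℂ | 0 < s.re} := isOpen_lt continuous_const Complex.continuous_re
    filter_upwards [hopen.mem_nhds (by norm_num : (0:ℝ) < (1:ℂ).re)] with s hs
    exact Complex.Gamma_eq_integral hs
  have := hG.unique Complex.hasDerivAt_Gamma_one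
  exact_mod_cast this

private theorem radial_integral_aux (t : ℝ) (ht : 0 < t) :
    ∫ r in Ioi (0:ℝ),
      r * (Real.log (1 / r) * ((1 / (4 * π * t)) * Real.exp (-r ^ 2 / (4 * t))))
    = (Real.eulerMascheroniConstant - Real.log (4 * t)) / (4 * π) := by
  set c : ℝ := 1 / (4 * π * t) with hc
  set g : ℝ → ℝ := fun v => (-(1/4) * Real.log v) * (c * Real.exp (-v / (4 * t))) with hg
  have h4t : (0:ℝ) < 4 * t := by linarith
  have step1 : ∫ r in Ioi (0:ℝ),
      r * (Real.log (1 / r) * (c * Real.exp (-r ^ 2 / (4 * t))))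
      = ∫ r in Ioi (0:ℝ), (|(2:ℝ)| * r ^ ((2:ℝ) - 1)) • g (r ^ (2:ℝ)) := by
    refine setIntegral_congr_fun measurableSet_Ioi (fun r hr => ?_)
    have hr0 : (0:ℝ) < r := hr
    rw [smul_eq_mul, hg]
    simp only
    rw [show r ^ (2:ℝ) = r ^ (2:ℕ) by rw [← Real.rpow_natCast r 2]; norm_num,
      show ((2:ℝ)-1) = (1:ℝ) by norm_num, Real.rpow_one,
      Real.log_pow, one_div, Real.log_inv, show |(2:ℝ)| = 2 from abs_of_pos two_pos]
    push_cast
    ring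
  have step2 : ∫ r in Ioi (0:ℝ), (|(2:ℝ)| * r ^ ((2:ℝ) - 1)) • g (r ^ (2:ℝ))
      = ∫ v in Ioi (0:ℝ), g v := MeasureTheory.integral_comp_rpow_Ioi g two_ne_zero
  have step3 : ∫ w in Ioi (0:ℝ), g ((4*t) * w) = (4*t)⁻¹ • ∫ v in Ioi (0:ℝ), g v := by
    simpa using MeasureTheory.integral_comp_mul_left_Ioi g 0 h4t
  have step4 : ∫ w in Ioi (0:ℝ), g ((4*t) * w)
      = ∫ w in Ioi (0:ℝ),
          ((-(1/4) * c * Real.log (4*t)) * Real.exp (-w)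
            + (-(1/4) * c) * (Real.log w * Real.exp (-w))) := by
    refine setIntegral_congr_fun measurableSet_Ioi (fun w hw => ?_)
    have hw0 : (0:ℝ) < w := hw
    rw [hg]
    simp only
    rw [Real.log_mul h4t.ne' hw0.ne',
      show -((4*t)*w) / (4*t) = -w by rw [neg_div, mul_div_cancel_left₀ _ h4t.ne']]
    ring
  have hint1 : IntegrableOn
      (fun w : ℝ => (-(1/4) * c * Real.log (4*t)) * Real.exp (-w)) (Ioi 0) := by
    have : IntegrableOn (fun w : ℝ => Real.exp (-w)) (Ioi (0:ℝ)) := by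
      simpa using exp_neg_integrableOn_Ioi 0 one_pos
    exact this.const_mul _
  have hint2 : IntegrableOn
      (fun w : ℝ => (-(1/4) * c) * (Real.log w * Real.exp (-w))) (Ioi 0) :=
    log_exp_integrable_aux.const_mul _
  have step5 : ∫ w in Ioi (0:ℝ),
          ((-(1/4) * c * Real.log (4*t)) * Real.exp (-w)
            + (-(1/4) * c) * (Real.log w * Real.exp (-w)))
      = (-(1/4) * c * Real.log (4*t)) * 1
          + (-(1/4) * c) * (-Real.eulerMascheroniConstant) := by
    rw [integral_add hint1 hint2, integral_const_mul, integral_const_mul,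
      integral_exp_neg_Ioi_zero, integral_log_exp_aux]
  have hgoal : ∫ v in Ioi (0:ℝ), g v
      = (4*t) * ((-(1/4) * c * Real.log (4*t)) * 1
          + (-(1/4) * c) * (-Real.eulerMascheroniConstant)) := by
    rw [← step5, ← step4, step3, smul_eq_mul]
    field_simp
  rw [step1, step2, hgoal, hc]
  field_simp
  ring

end Aux

theorem heat_kernel_log_integral (t : ℝ) (ht : 0 < t) :
    ∫ y : EuclideanSpace ℝ (Fin 2),
        Real.log (1 / ‖y‖) * ((1 / (4 * π * t)) * Real.exp (-‖y‖ ^ 2 / (4 * t)))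
      = Real.eulerMascheroniConstant / 2 - Real.log (4 * t) / 2 := by
  have key := MeasureTheory.integral_fun_norm_addHaar
    (volume : Measure (EuclideanSpace ℝ (Fin 2)))
    (fun r : ℝ => Real.log (1 / r) * ((1 / (4 * π * t)) * Real.exp (-r ^ 2 / (4 * t))))
  rw [key]
  have hdim : Module.finrank ℝ (EuclideanSpace ℝ (Fin 2)) = 2 := by
    simp [finrank_euclideanSpace]
  rw [hdim]
  have hball : (volume (Metric.ball (0 : EuclideanSpace ℝ (Fin 2)) 1)).toReal = π := by
    rw [EuclideanSpace.volume_ball]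
    rw [show ((Fintype.card (Fin 2) : ℝ)/2 + 1) = 2 by simp; norm_num, Real.Gamma_two]
    rw [show (Fintype.card (Fin 2)) = 2 from rfl]
    rw [ENNReal.ofReal_one, one_pow, one_mul, ENNReal.toReal_ofReal (by positivity)]
    rw [div_one, sq_sqrt pi_pos.le]
  rw [measureReal_def, hball]
  have hrad := radial_integral_aux t ht
  have hinner : ∫ r in Set.Ioi (0:ℝ),
      r ^ (2 - 1) • (Real.log (1 / r) * ((1 / (4 * π * t)) * Real.exp (-r ^ 2 / (4 * t))))
      = (Real.eulerMascheroniConstant - Real.log (4 * t)) / (4 * π) := by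
    rw [← hrad]
    refine setIntegral_congr_fun measurableSet_Ioi (fun r hr => ?_)
    simp [smul_eq_mul]
  rw [hinner, nsmul_eq_mul, smul_eq_mul]
  have hpi : π ≠ 0 := pi_ne_zero
  field_simp
  ring
end

section
/- For every t > 0, the improper integral ∫₀^∞ log(1/r)·exp(−r²/(4t))·r dr equals t·(γ − log(4t)), where γ is the Euler–Mascheroni constant. -/
open MeasureTheory Real Set

lemma aux_integrableOn_log_mul_exp_neg :
    IntegrableOn (fun u : ℝ => Real.log u * Real.exp (-u)) (Set.Ioi 0) := by
  have hmaj : IntegrableOn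
      (fun u : ℝ => 2 * (Real.exp (-u) * u ^ ((1:ℝ)/2 - 1)) + Real.exp (-u) * u ^ ((2:ℝ) - 1))
      (Set.Ioi 0) := by
    exact ((Real.GammaIntegral_convergent (by norm_num : (0:ℝ) < 1/2)).const_mul 2).add
      (Real.GammaIntegral_convergent (by norm_num : (0:ℝ) < 2))
  refine Integrable.mono' hmaj ?_ ?_
  · exact (Real.measurable_log.mul (Real.measurable_exp.comp measurable_neg)).aestronglyMeasurable
  · rw [ae_restrict_iff' measurableSet_Ioi]
    filter_upwards with u hu
    have hu0 : (0:ℝ) < u := hu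
    have hub : |Real.log u| ≤ 2 * u ^ (-(1:ℝ)/2) + u := by
      have h1 : Real.log u ≤ u := (Real.log_le_sub_one_of_pos hu0).trans (by linarith)
      have h2 : -Real.log u ≤ 2 * u ^ (-(1:ℝ)/2) := by
        have hru : (0:ℝ) < u ^ ((1:ℝ)/2) := Real.rpow_pos_of_pos hu0 _
        have := Real.log_le_sub_one_of_pos (show (0:ℝ) < (u ^ ((1:ℝ)/2))⁻¹ by positivity)
        rw [Real.log_inv, Real.log_rpow hu0] at this
        have hinv : (u ^ ((1:ℝ)/2))⁻¹ = u ^ (-(1:ℝ)/2) := by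
          rw [← Real.rpow_neg hu0.le]; norm_num
        nlinarith [this, hru]
      rw [abs_le]
      constructor
      · nlinarith [Real.rpow_pos_of_pos hu0 (-(1:ℝ)/2)]
      · nlinarith [Real.rpow_pos_of_pos hu0 (-(1:ℝ)/2)]
    have hexp : (0:ℝ) < Real.exp (-u) := Real.exp_pos _
    have : ‖Real.log u * Real.exp (-u)‖ = |Real.log u| * Real.exp (-u) := by
      rw [norm_mul, Real.norm_eq_abs, Real.norm_eq_abs, abs_of_pos hexp]
    rw [this]
    have h12 : u ^ ((1:ℝ)/2 - 1) = u ^ (-(1:ℝ)/2) := by norm_num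
    have h21 : u ^ ((2:ℝ) - 1) = u := by
      rw [show (2:ℝ) - 1 = 1 by norm_num, Real.rpow_one]
    rw [h12, h21]
    nlinarith [mul_le_mul_of_nonneg_right hub hexp.le]

lemma aux_integral_log_mul_exp_neg :
    ∫ u in Set.Ioi (0:ℝ), Real.log u * Real.exp (-u) = -Real.eulerMascheroniConstant := by
  have h1 := Complex.hasDerivAt_GammaIntegral (s := 1) (by norm_num)
  have h2 : HasDerivAt Complex.GammaIntegral (-(Real.eulerMascheroniConstant : ℂ)) 1 := by
    refine Complex.hasDerivAt_Gamma_one.congr_of_eventuallyEq ?_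
    have hopen : IsOpen {s : ℂ | 0 < s.re} := isOpen_lt continuous_const Complex.continuous_re
    filter_upwards [hopen.mem_nhds (by norm_num : (0:ℝ) < (1:ℂ).re)] with s hs
    exact (Complex.Gamma_eq_integral hs).symm
  have h4 := (h2.unique h1).symm
  simp only [sub_self, Complex.cpow_zero, one_mul] at h4
  simp_rw [← Complex.ofReal_mul] at h4
  have h5 : (∫ u in Set.Ioi (0:ℝ), ((Real.log u * Real.exp (-u) : ℝ) : ℂ))
      = ((∫ u in Set.Ioi (0:ℝ), Real.log u * Real.exp (-u) : ℝ) : ℂ) := integral_ofReal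
  rw [h5] at h4
  exact_mod_cast h4

theorem radial_log_gaussian_integral (t : ℝ) (ht : 0 < t) :
    ∫ r in Set.Ioi (0 : ℝ), Real.log (1 / r) * Real.exp (-r ^ 2 / (4 * t)) * r
      = t * (Real.eulerMascheroniConstant - Real.log (4 * t)) := by
  have h4t : (0:ℝ) < 4 * t := by linarith
  set g : ℝ → ℝ := fun y => (-(1/4) * Real.log y) * Real.exp (-y / (4*t)) with hg
  have step1 : ∫ r in Set.Ioi (0:ℝ), Real.log (1/r) * Real.exp (-r^2/(4*t)) * r
      = ∫ y in Set.Ioi (0:ℝ), g y := by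
    rw [← integral_comp_rpow_Ioi_of_pos (g := g) (p := 2) two_pos]
    refine setIntegral_congr_fun measurableSet_Ioi fun x hx => ?_
    have hx0 : (0:ℝ) < x := hx
    have h1 : x ^ ((2:ℝ) - 1) = x := by
      rw [show (2:ℝ) - 1 = 1 by norm_num, Real.rpow_one]
    have h2 : x ^ (2:ℝ) = x ^ 2 := by
      rw [show (2:ℝ) = ((2:ℕ):ℝ) by norm_num, Real.rpow_natCast]
    simp only [smul_eq_mul, hg, h1, h2]
    rw [Real.log_pow, one_div, Real.log_inv]
    push_cast
    ring
  have step2 : (∫ y in Set.Ioi (0:ℝ), g y)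
      = (4*t) * ∫ u in Set.Ioi (0:ℝ), g ((4*t) * u) := by
    rw [integral_comp_mul_left_Ioi g 0 h4t, mul_zero, smul_eq_mul]
    field_simp
  have he : IntegrableOn (fun u : ℝ => Real.exp (-u)) (Set.Ioi 0) := by
    simpa using exp_neg_integrableOn_Ioi 0 (by norm_num : (0:ℝ) < 1)
  have step3 : (∫ u in Set.Ioi (0:ℝ), g ((4*t) * u))
      = (-(1/4) * Real.log (4*t)) * 1 + (-(1/4)) * (-Real.eulerMascheroniConstant) := by
    have hsplit : ∀ u ∈ Set.Ioi (0:ℝ), g ((4*t) * u)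
        = (-(1/4) * Real.log (4*t)) * Real.exp (-u)
          + (-(1/4)) * (Real.log u * Real.exp (-u)) := by
      intro u hu
      have hu0 : (0:ℝ) < u := hu
      have harg : -((4*t) * u) / (4*t) = -u := by field_simp
      rw [hg]
      simp only
      rw [harg, Real.log_mul h4t.ne' hu0.ne']
      ring
    rw [setIntegral_congr_fun measurableSet_Ioi hsplit,
      integral_add (he.const_mul _) (aux_integrableOn_log_mul_exp_neg.const_mul _),
      integral_const_mul, integral_const_mul, integral_exp_neg_Ioi_zero,
      aux_integral_log_mul_exp_neg]
  rw [step1, step2, step3]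
  ring
end

section
/- For every c > 0, ∫₀^c (1/(2s))·( L(exp(−2π/(√3·s))) − 1 ) ds = (1/2)·∑_{(k₁,k₂) ∈ ℤ², (k₁,k₂) ≠ (0,0)} Γ(0, (2π/(√3·c))·(k₁² + k₁k₂ + k₂²)), where L(q) = ∑_{m,n ∈ ℤ} q^{m²+mn+n²} and Γ(0,z) = ∫_z^∞ e^{−t}/t dt is the incomplete gamma function. -/
set_option maxHeartbeats 1000000

open MeasureTheory Real

/-- The cubic analogue of the Jacobi theta function:
`L(q) = ∑_{m,n ∈ ℤ} q^(m² + mn + n²)`. -/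
noncomputable def cubicTheta (q : ℝ) : ℝ :=
  ∑' p : ℤ × ℤ, q ^ (p.1 ^ 2 + p.1 * p.2 + p.2 ^ 2)

/-- The incomplete gamma function `Γ(0, z) = ∫_z^∞ e^{-t}/t dt` for `z > 0`. -/
noncomputable def incGamma (z : ℝ) : ℝ := ∫ t in Set.Ioi z, Real.exp (-t) / t

open Set

noncomputable def Qr (p : ℤ × ℤ) : ℝ := (p.1:ℝ)^2 + (p.1:ℝ)*(p.2:ℝ) + (p.2:ℝ)^2

lemma exp_zpow' (x : ℝ) (n : ℤ) : Real.exp x ^ n = Real.exp (n * x) := by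
  rw [← Real.rpow_intCast, Real.rpow_def_of_pos (Real.exp_pos x), Real.log_exp, mul_comm]

lemma subst_lemma {b c : ℝ} (hb : 0 < b) (hc : 0 < c) :
    ∫ s in Set.Ioo (0:ℝ) c, (1/(2*s)) * Real.exp (-(b/s))
      = (1/2) * incGamma (b/c) := by
  have h1c : 0 < 1/c := by positivity
  set f : ℝ → ℝ := Set.indicator (Set.Ioi (1/c)) (fun u => Real.exp (-(b*u)) / (2*u)) with hf
  have key := MeasureTheory.integral_comp_rpow_Ioi f (p := -1) (by norm_num)
  have hRHS : ∫ y in Ioi (0:ℝ), f y = ∫ y in Ioi (1/c), Real.exp (-(b*y)) / (2*y) := by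
    rw [hf, setIntegral_indicator measurableSet_Ioi, Set.Ioi_inter_Ioi,
      max_eq_right h1c.le]
  have hLHS : ∫ x in Ioi (0:ℝ), (|(-1:ℝ)| * x ^ ((-1:ℝ) - 1)) • f (x ^ (-1:ℝ))
      = ∫ s in Set.Ioo (0:ℝ) c, (1/(2*s)) * Real.exp (-(b/s)) := by
    have hsub : Ioi (0:ℝ) ∩ Ioo 0 c = Ioo 0 c :=
      Set.inter_eq_right.2 Set.Ioo_subset_Ioi_self
    rw [show (∫ s in Set.Ioo (0:ℝ) c, (1/(2*s)) * Real.exp (-(b/s)))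
        = ∫ x in Ioi (0:ℝ), Set.indicator (Set.Ioo (0:ℝ) c)
            (fun s => (1/(2*s)) * Real.exp (-(b/s))) x from by
      rw [setIntegral_indicator measurableSet_Ioo, hsub]]
    apply setIntegral_congr_fun measurableSet_Ioi
    intro x hx
    have hx0 : (0:ℝ) < x := hx
    have hinv : x ^ (-1:ℝ) = x⁻¹ := Real.rpow_neg_one x
    have hsq : x ^ ((-1:ℝ) - 1) = (x^2)⁻¹ := by
      rw [show ((-1:ℝ) - 1) = ((-2 : ℤ) : ℝ) by norm_num, Real.rpow_intCast, zpow_neg]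
      norm_cast
    dsimp only
    rw [hinv, hsq]
    rcases lt_or_ge x c with hxc | hxc
    · have hmem : x⁻¹ ∈ Ioi (1/c) := by
        simp only [mem_Ioi]
        rw [inv_eq_one_div]
        exact one_div_lt_one_div_of_lt hx0 hxc
      rw [hf, Set.indicator_of_mem hmem, Set.indicator_of_mem (by exact ⟨hx0, hxc⟩)]
      have hxne : x ≠ 0 := hx0.ne'
      rw [show b * x⁻¹ = b / x from by field_simp]
      simp only [smul_eq_mul, abs_neg, abs_one, one_mul]
      field_simp
    · have hnm : x⁻¹ ∉ Ioi (1/c) := by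
        simp only [mem_Ioi, not_lt]
        rw [inv_eq_one_div]
        exact one_div_le_one_div_of_le hc hxc
      rw [hf, Set.indicator_of_notMem hnm, Set.indicator_of_notMem (by
        simp only [mem_Ioo, not_and, not_lt]; exact fun _ => hxc)]
      simp
  -- step A
  have hA : ∫ y in Ioi (1/c), Real.exp (-(b*y)) / (2*y)
      = (1/2) * incGamma (b/c) := by
    have h2 := MeasureTheory.integral_comp_mul_left_Ioi
      (fun t => b * (Real.exp (-t) / (2*t))) (1/c) hb
    have hptw : ∀ x : ℝ, b * (Real.exp (-(b*x)) / (2*(b*x))) = Real.exp (-(b*x)) / (2*x) := by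
      intro x
      rcases eq_or_ne x 0 with rfl | hx
      · simp
      · field_simp
    rw [show (∫ y in Ioi (1/c), Real.exp (-(b*y)) / (2*y))
        = ∫ x in Ioi (1/c), (fun t => b * (Real.exp (-t) / (2*t))) (b * x) from
      (setIntegral_congr_fun measurableSet_Ioi (fun x _ => (hptw x).symm)), h2,
      mul_one_div b c]
    rw [MeasureTheory.integral_const_mul, smul_eq_mul]
    rw [show (∫ t in Ioi (b/c), Real.exp (-t) / (2*t))
        = ∫ t in Ioi (b/c), (1/2) * (Real.exp (-t) / t) from
      setIntegral_congr_fun measurableSet_Ioi (fun t _ => by ring)]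
    rw [MeasureTheory.integral_const_mul, incGamma]
    field_simp
  rw [← hLHS, key, hRHS, hA]

lemma abs_le_sq' (m : ℤ) : |(m:ℝ)| ≤ (m:ℝ)^2 := by
  rcases eq_or_ne m 0 with rfl | h
  · simp
  · have h1 : (1:ℝ) ≤ |(m:ℝ)| := by
      rw [← Int.cast_abs]
      exact_mod_cast Int.one_le_abs h
    nlinarith [sq_abs ((m:ℝ))]

lemma one_le_Qr {p : ℤ × ℤ} (hp : p ≠ 0) : 1 ≤ Qr p := by
  have key : 1 ≤ p.1^2 + p.1*p.2 + p.2^2 := by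
    rcases eq_or_ne p.2 0 with h2 | h2
    · have h1 : p.1 ≠ 0 := by
        intro h1; exact hp (Prod.ext h1 h2)
      have h3 := Int.one_le_abs h1
      have h4 : 1*1 ≤ |p.1| * |p.1| :=
        mul_le_mul h3 h3 (by norm_num) (abs_nonneg _)
      rw [abs_mul_abs_self] at h4
      nlinarith [h2]
    · have := Int.one_le_abs h2
      have h4 : 3 ≤ 4 * (p.1^2 + p.1*p.2 + p.2^2) := by
        nlinarith [sq_nonneg (2*p.1 + p.2), sq_abs p.2]
      omega
  unfold Qr
  exact_mod_cast key

lemma Qr_nonneg (p : ℤ × ℤ) : 0 ≤ Qr p := by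
  unfold Qr
  nlinarith [sq_nonneg ((p.1:ℝ) + (p.2:ℝ)), sq_nonneg (p.1:ℝ), sq_nonneg (p.2:ℝ)]

lemma summable_exp_neg_Qr {d : ℝ} (hd : 0 < d) :
    Summable (fun p : ℤ × ℤ => Real.exp (-(d * Qr p))) := by
  set r : ℝ := Real.exp (-(d/2)) with hr
  have hr0 : 0 < r := Real.exp_pos _
  have hr1 : r < 1 := by
    rw [hr, Real.exp_lt_one_iff]
    linarith
  have hgeo : Summable (fun n : ℕ => r ^ n) := summable_geometric_of_lt_one hr0.le hr1
  have hs1 : Summable (fun n : ℤ => r ^ n.natAbs) := by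
    apply Summable.of_nat_of_neg
    · simpa using hgeo
    · simpa using hgeo
  have hprod : Summable (fun p : ℤ × ℤ => r ^ p.1.natAbs * r ^ p.2.natAbs) :=
    hs1.mul_of_nonneg hs1 (fun n => pow_nonneg hr0.le _) (fun n => pow_nonneg hr0.le _)
  apply Summable.of_nonneg_of_le (fun p => (Real.exp_pos _).le) _ hprod
  intro p
  have hb : |(p.1:ℝ)| + |(p.2:ℝ)| ≤ 2 * Qr p := by
    have h1 := abs_le_sq' p.1
    have h2 := abs_le_sq' p.2
    unfold Qr
    nlinarith [sq_nonneg ((p.1:ℝ) + (p.2:ℝ))]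
  have h1 : Real.exp (-(d * Qr p)) ≤ Real.exp (-(d/2) * (|(p.1:ℝ)| + |(p.2:ℝ)|)) := by
    apply Real.exp_le_exp.2
    nlinarith
  refine h1.trans_eq ?_
  have habs : ∀ m : ℤ, Real.exp (-(d/2) * |(m:ℝ)|) = r ^ m.natAbs := by
    intro m
    rw [show |(m:ℝ)| = ((m.natAbs : ℕ) : ℝ) from by rw [Nat.cast_natAbs, Int.cast_abs],
      show (-(d/2) * (m.natAbs:ℝ)) = (m.natAbs:ℝ) * (-(d/2)) from mul_comm _ _,
      Real.exp_nat_mul]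
  rw [show (-(d/2) * (|(p.1:ℝ)| + |(p.2:ℝ)|)) = -(d/2) * |(p.1:ℝ)| + -(d/2) * |(p.2:ℝ)| from by ring,
    Real.exp_add, habs, habs]

lemma tsum_split (g : ℤ × ℤ → ℝ) (hg : Summable g) :
    ∑' p, g p = g 0 + ∑' p : {p : ℤ × ℤ // p ≠ 0}, g ↑p := by
  classical
  rw [Summable.tsum_eq_add_tsum_ite hg 0]
  congr 1
  have h := tsum_subtype {p : ℤ × ℤ | p ≠ 0} g
  rw [show (∑' p : {p : ℤ × ℤ // p ≠ 0}, g ↑p)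
      = ∑' x : ({p : ℤ × ℤ | p ≠ 0} : Set (ℤ × ℤ)), g ↑x from rfl, h]
  exact tsum_congr fun p => by by_cases h : p = 0 <;> simp [h]

lemma exp_div_le (b s : ℝ) (hb : 0 < b) (hs : 0 < s) :
    (1/(2*s)) * Real.exp (-(b/s)) ≤ 1/(2*b) := by
  have hbs : 0 < b/s := by positivity
  have h1 : b/s ≤ Real.exp (b/s) := by linarith [Real.add_one_le_exp (b/s)]
  have h2 : Real.exp (-(b/s)) ≤ s/b := by
    rw [Real.exp_neg]
    calc (Real.exp (b/s))⁻¹ ≤ (b/s)⁻¹ := by gcongr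
      _ = s/b := by rw [inv_div]
  calc (1/(2*s)) * Real.exp (-(b/s)) ≤ (1/(2*s)) * (s/b) := by
        apply mul_le_mul_of_nonneg_left h2 (by positivity)
    _ = 1/(2*b) := by field_simp

lemma integrableOn_F {b c : ℝ} (hb : 0 < b) (hc : 0 < c) :
    IntegrableOn (fun s => (1/(2*s)) * Real.exp (-(b/s))) (Set.Ioo (0:ℝ) c) := by
  apply Integrable.mono' (g := fun _ => 1/(2*b))
      (integrableOn_const (by rw [Real.volume_Ioo]; exact ENNReal.ofReal_ne_top))
  · apply Measurable.aestronglyMeasurable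
    fun_prop
  · filter_upwards [ae_restrict_mem measurableSet_Ioo] with s hs
    rw [Real.norm_eq_abs, abs_of_nonneg (by have := hs.1; positivity)]
    exact exp_div_le b s hb hs.1

lemma F_le {b c s : ℝ} (hb : 0 < b) (hc : 0 < c) (hs : s ∈ Set.Ioo (0:ℝ) c) :
    (1/(2*s)) * Real.exp (-(b/s)) ≤ Real.exp (-(b/(2*c))) / b := by
  have hs0 : 0 < s := hs.1
  have hsc : s < c := hs.2
  have hsplit : Real.exp (-(b/s)) = Real.exp (-(b/(2*s))) * Real.exp (-(b/(2*s))) := by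
    rw [← Real.exp_add]
    congr 1
    field_simp
    ring
  have h1 : Real.exp (-(b/(2*s))) ≤ Real.exp (-(b/(2*c))) := by
    apply Real.exp_le_exp.2
    have : b/(2*c) ≤ b/(2*s) := by gcongr <;> linarith
    linarith
  have h2 : (1/(2*s)) * Real.exp (-(b/(2*s))) ≤ 1/b := by
    have h3 := exp_div_le (b/2) s (by positivity) hs0
    rw [div_div] at h3
    calc (1/(2*s)) * Real.exp (-(b/(2*s))) ≤ 1/(2*(b/2)) := h3
      _ = 1/b := by field_simp
  calc (1/(2*s)) * Real.exp (-(b/s))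
      = (1/(2*s)) * Real.exp (-(b/(2*s))) * Real.exp (-(b/(2*s))) := by rw [hsplit]; ring
    _ ≤ (1/b) * Real.exp (-(b/(2*c))) :=
        mul_le_mul h2 h1 (Real.exp_pos _).le (by positivity)
    _ = Real.exp (-(b/(2*c))) / b := by ring

theorem integral_cubicTheta_eq_sum_incGamma (c : ℝ) (hc : 0 < c) :
    ∫ s in Set.Ioo (0 : ℝ) c,
        (1 / (2 * s)) * (cubicTheta (Real.exp (-2 * π / (Real.sqrt 3 * s))) - 1)
      = (1 / 2) * ∑' p : { p : ℤ × ℤ // p ≠ 0 },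
          incGamma ((2 * π / (Real.sqrt 3 * c))
            * ((p.1.1 : ℝ) ^ 2 + (p.1.1 : ℝ) * (p.1.2 : ℝ) + (p.1.2 : ℝ) ^ 2)) := by
  have h3 : (0:ℝ) < Real.sqrt 3 := by positivity
  have hpi := Real.pi_pos
  set a : ℝ := 2 * π / Real.sqrt 3 with ha_def
  have ha : 0 < a := by positivity
  have hbp : ∀ p : {p : ℤ × ℤ // p ≠ 0}, 0 < a * Qr p.1 := by
    intro p
    have := one_le_Qr p.2
    nlinarith
  -- pointwise identity on Ioo 0 c
  have hpt : ∀ s ∈ Set.Ioo (0:ℝ) c,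
      (1 / (2 * s)) * (cubicTheta (Real.exp (-2 * π / (Real.sqrt 3 * s))) - 1)
        = ∑' p : {p : ℤ × ℤ // p ≠ 0}, (1/(2*s)) * Real.exp (-((a * Qr ↑p)/s)) := by
    intro s hs
    have hs0 : 0 < s := hs.1
    have hterm : ∀ p : ℤ × ℤ,
        Real.exp (-2 * π / (Real.sqrt 3 * s)) ^ (p.1 ^ 2 + p.1 * p.2 + p.2 ^ 2)
          = Real.exp (-((a * Qr p)/s)) := by
      intro p
      rw [exp_zpow']
      congr 1
      rw [Qr, ha_def]
      push_cast
      field_simp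
    have hsum : Summable (fun p : ℤ × ℤ =>
        Real.exp (-2 * π / (Real.sqrt 3 * s)) ^ (p.1 ^ 2 + p.1 * p.2 + p.2 ^ 2)) := by
      have heq : (fun p : ℤ × ℤ =>
          Real.exp (-2 * π / (Real.sqrt 3 * s)) ^ (p.1 ^ 2 + p.1 * p.2 + p.2 ^ 2))
          = fun p => Real.exp (-((a/s) * Qr p)) := by
        funext p
        rw [hterm p]
        congr 1
        ring
      rw [heq]
      exact summable_exp_neg_Qr (by positivity)
    rw [cubicTheta, tsum_split _ hsum]
    have h00 : Real.exp (-2 * π / (Real.sqrt 3 * s))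
        ^ ((0:ℤ×ℤ).1 ^ 2 + (0:ℤ×ℤ).1 * (0:ℤ×ℤ).2 + (0:ℤ×ℤ).2 ^ 2) = 1 := by
      simp
    rw [h00, add_sub_cancel_left]
    rw [show (∑' p : {p : ℤ × ℤ // p ≠ 0},
        Real.exp (-2 * π / (Real.sqrt 3 * s)) ^ ((↑p:ℤ×ℤ).1 ^ 2 + (↑p:ℤ×ℤ).1 * (↑p:ℤ×ℤ).2 + (↑p:ℤ×ℤ).2 ^ 2))
        = ∑' p : {p : ℤ × ℤ // p ≠ 0}, Real.exp (-((a * Qr ↑p)/s)) from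
      tsum_congr fun p => hterm ↑p]
    exact tsum_mul_left.symm
  rw [setIntegral_congr_fun measurableSet_Ioo hpt]
  -- swap integral and sum
  set F : {p : ℤ × ℤ // p ≠ 0} → ℝ → ℝ :=
    fun p s => (1/(2*s)) * Real.exp (-((a * Qr ↑p)/s)) with hF
  have hint : ∀ p, Integrable (F p) (volume.restrict (Set.Ioo (0:ℝ) c)) :=
    fun p => integrableOn_F (hbp p) hc
  have hnormeq : ∀ p : {p : ℤ × ℤ // p ≠ 0},
      (∫ s in Set.Ioo (0:ℝ) c, ‖F p s‖) = ∫ s in Set.Ioo (0:ℝ) c, F p s := by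
    intro p
    apply setIntegral_congr_fun measurableSet_Ioo
    intro s hs
    dsimp only
    rw [Real.norm_eq_abs, abs_of_nonneg (by have := hs.1; positivity)]
  have hsummable_norm : Summable
      (fun p : {p : ℤ × ℤ // p ≠ 0} => ∫ s in Set.Ioo (0:ℝ) c, ‖F p s‖) := by
    have hgsum : Summable (fun p : {p : ℤ × ℤ // p ≠ 0} =>
        c * (Real.exp (-((a/(2*c)) * Qr ↑p)) / a)) := by
      have h1 := summable_exp_neg_Qr (d := a/(2*c)) (by positivity)
      exact (((h1.div_const a).mul_left c).subtype _)
    apply Summable.of_nonneg_of_le _ _ hgsum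
    · intro p
      exact setIntegral_nonneg measurableSet_Ioo (fun s _ => norm_nonneg _)
    · intro p
      have hb := hbp p
      have hle : ∀ s ∈ Set.Ioo (0:ℝ) c, ‖F p s‖ ≤ Real.exp (-((a * Qr ↑p)/(2*c))) / (a * Qr ↑p) := by
        intro s hs
        rw [Real.norm_eq_abs, abs_of_nonneg (by have := hs.1; positivity)]
        exact F_le hb hc hs
      calc (∫ s in Set.Ioo (0:ℝ) c, ‖F p s‖)
          ≤ ∫ _ in Set.Ioo (0:ℝ) c, Real.exp (-((a * Qr ↑p)/(2*c))) / (a * Qr ↑p) := by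
            apply setIntegral_mono_on ((hint p).norm) (integrableOn_const (by
              rw [Real.volume_Ioo]; exact ENNReal.ofReal_ne_top)) measurableSet_Ioo hle
        _ = c * (Real.exp (-((a * Qr ↑p)/(2*c))) / (a * Qr ↑p)) := by
            rw [setIntegral_const, measureReal_def, Real.volume_Ioo, smul_eq_mul]
            congr 1
            rw [ENNReal.toReal_ofReal (by linarith)]
            ring
        _ ≤ c * (Real.exp (-((a/(2*c)) * Qr ↑p)) / a) := by
            have hexp : Real.exp (-((a * Qr ↑p)/(2*c))) = Real.exp (-((a/(2*c)) * Qr ↑p)) := by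
              congr 1
              ring
            rw [hexp]
            have h1le : 1 ≤ Qr ↑p := one_le_Qr p.2
            gcongr
            nlinarith
  have hswap := MeasureTheory.integral_tsum_of_summable_integral_norm hint hsummable_norm
  rw [← hswap]
  have heval : ∀ p : {p : ℤ × ℤ // p ≠ 0},
      (∫ s in Set.Ioo (0:ℝ) c, F p s)
        = (1/2) * incGamma ((2 * π / (Real.sqrt 3 * c))
            * ((p.1.1 : ℝ) ^ 2 + (p.1.1 : ℝ) * (p.1.2 : ℝ) + (p.1.2 : ℝ) ^ 2)) := by
    intro p
    rw [hF]
    rw [subst_lemma (hbp p) hc]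
    congr 1
    rw [Qr, ha_def]
    field_simp
  rw [show (fun p : {p : ℤ × ℤ // p ≠ 0} => ∫ s in Set.Ioo (0:ℝ) c, F p s)
      = fun p : {p : ℤ × ℤ // p ≠ 0} => (1/2) * incGamma ((2 * π / (Real.sqrt 3 * c))
            * ((p.1.1 : ℝ) ^ 2 + (p.1.1 : ℝ) * (p.1.2 : ℝ) + (p.1.2 : ℝ) ^ 2)) from
    funext heval]
  exact tsum_mul_left
end

section
/- For all q sufficiently close to 1 from below (i.e., there exists q₀ ∈ (0,1) such that for all q ∈ (q₀, 1)), one has ∑_{m,n ∈ ℤ} q^{m²+mn+n²} ≥ 2π / (√3 · log(1/q)). -/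
open Real

namespace CubicThetaAux

lemma summable_nat_exp (t b : ℝ) (ht : 0 < t) :
    Summable fun n : ℕ => rexp (-t * ((n : ℝ) + b) ^ 2) := by
  have hf : Summable fun n : ℕ => rexp (t * b ^ 2) * rexp (-(t / 2)) ^ n :=
    (summable_geometric_of_lt_one (Real.exp_pos _).le
      (Real.exp_lt_one_iff.2 (by linarith))).mul_left _
  refine Summable.of_nonneg_of_le (fun n => (Real.exp_pos _).le) (fun n => ?_) hf
  rw [← Real.exp_nat_mul, ← Real.exp_add]
  apply Real.exp_le_exp.2
  have h2 : (n : ℝ) ≤ (n : ℝ) ^ 2 := by exact_mod_cast Nat.le_self_pow two_ne_zero n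
  nlinarith [sq_nonneg ((n : ℝ) + 2 * b)]

lemma summable_int_exp (t b : ℝ) (ht : 0 < t) :
    Summable fun n : ℤ => rexp (-t * ((n : ℝ) + b) ^ 2) := by
  apply Summable.of_nat_of_neg
  · have := summable_nat_exp t b ht
    apply this.congr; intro n; push_cast; ring_nf
  · have := summable_nat_exp t (-b) ht
    apply this.congr; intro n; push_cast; ring_nf

lemma theta0_eq {t : ℝ} (ht : 0 < t) :
    ∑' n : ℤ, rexp (-t * (n : ℝ) ^ 2)
      = Real.sqrt (π / t) * ∑' n : ℤ, rexp (-(π ^ 2 / t) * (n : ℝ) ^ 2) := by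
  have hpt : (0:ℝ) < t / π := div_pos ht pi_pos
  have h := Real.tsum_exp_neg_mul_int_sq hpt
  have h1 : -π * (t / π) = -t := by
    field_simp
  have h2 : -π / (t / π) = -(π ^ 2 / t) := by
    rw [div_div_eq_mul_div]
    ring
  rw [h1, h2] at h
  rw [h]
  congr 1
  rw [Real.sqrt_eq_rpow, show π / t = (t / π)⁻¹ by rw [inv_div],
    Real.inv_rpow hpt.le, one_div]

lemma thetah_eq {t : ℝ} (ht : 0 < t) :
    ∑' n : ℤ, rexp (-t * ((n : ℝ) + 1/2) ^ 2)
      = Real.sqrt (π / t) * ∑' n : ℤ, (-1 : ℝ) ^ n * rexp (-(π ^ 2 / t) * (n : ℝ) ^ 2) := by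
  have hpt : (0:ℝ) < π / t := div_pos pi_pos ht
  have ha : 0 < ((π / t : ℝ) : ℂ).re := by simpa using hpt
  have h := Complex.tsum_exp_neg_quadratic ha (-(Complex.I / 2))
  have hL : ∀ n : ℤ, Complex.exp (-(π:ℂ) * ((π / t : ℝ):ℂ) * (n:ℂ) ^ 2
        + 2 * (π:ℂ) * (-(Complex.I / 2)) * (n:ℂ))
      = ((((-1:ℝ) ^ n * rexp (-(π ^ 2 / t) * (n:ℝ) ^ 2)) : ℝ) : ℂ) := by
    intro n
    rw [Complex.exp_add]
    have e1 : (-(π:ℂ) * ((π / t : ℝ):ℂ) * (n:ℂ) ^ 2 : ℂ)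
        = ((-(π^2/t) * (n:ℝ)^2 : ℝ) : ℂ) := by
      push_cast
      ring
    have e2 : (2 * (π:ℂ) * (-(Complex.I / 2)) * (n:ℂ) : ℂ)
        = (n:ℂ) * (-((π:ℂ) * Complex.I)) := by ring
    rw [e1, e2, Complex.exp_int_mul, ← Complex.ofReal_exp, Complex.exp_neg,
      Complex.exp_pi_mul_I]
    push_cast
    ring
  have hR : ∀ n : ℤ, Complex.exp (-(π:ℂ) / ((π / t : ℝ):ℂ)
        * ((n:ℂ) + Complex.I * (-(Complex.I / 2))) ^ 2)
      = ((rexp (-t * ((n:ℝ) + 1/2) ^ 2) : ℝ) : ℂ) := by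
    intro n
    have e3 : ((n:ℂ) + Complex.I * (-(Complex.I / 2))) = (((n:ℝ) + 1/2 : ℝ) : ℂ) := by
      have hI : Complex.I * -(Complex.I / 2) = 1/2 := by
        rw [mul_neg, mul_div_assoc', Complex.I_mul_I]
        norm_num
      rw [hI]
      push_cast
      ring
    have e4 : (-(π:ℂ) / ((π / t : ℝ):ℂ)) = ((-t : ℝ) : ℂ) := by
      have hne : ((π / t : ℝ) : ℂ) ≠ 0 := Complex.ofReal_ne_zero.mpr (ne_of_gt hpt)
      have htne : (t:ℂ) ≠ 0 := Complex.ofReal_ne_zero.mpr (ne_of_gt ht)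
      rw [div_eq_iff hne]
      push_cast
      field_simp
    have e5 : -(π:ℂ) / ((π / t : ℝ):ℂ) * ((n:ℂ) + Complex.I * (-(Complex.I / 2))) ^ 2
        = ((-t * ((n:ℝ) + 1/2) ^ 2 : ℝ) : ℂ) := by
      rw [e3, e4]
      push_cast
      ring
    rw [e5, ← Complex.ofReal_exp]
  simp only [hL, hR] at h
  rw [← Complex.ofReal_tsum, ← Complex.ofReal_tsum] at h
  have hsc : ((π / t : ℝ):ℂ) ^ (1/2 : ℂ) = ((Real.sqrt (π / t) : ℝ) : ℂ) := by
    rw [Real.sqrt_eq_rpow, Complex.ofReal_cpow hpt.le]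
    norm_num
  rw [hsc] at h
  have hs : 0 < Real.sqrt (π / t) := Real.sqrt_pos.mpr hpt
  have h' : (∑' n : ℤ, (-1 : ℝ) ^ n * rexp (-(π ^ 2 / t) * (n : ℝ) ^ 2))
      = 1 / Real.sqrt (π / t) * ∑' n : ℤ, rexp (-t * ((n : ℝ) + 1/2) ^ 2) := by
    exact_mod_cast h
  rw [h']
  field_simp
  ring

def evenSet : Set (ℤ × ℤ) := {p | Even p.2}

def gE : ℤ × ℤ → evenSet :=
  fun x => ⟨(x.1 - x.2, 2 * x.2), ⟨x.2, two_mul x.2⟩⟩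

lemma gE_bij : Function.Bijective gE := by
  constructor
  · rintro ⟨a1, a2⟩ ⟨b1, b2⟩ h
    rw [Subtype.ext_iff, Prod.ext_iff] at h
    simp only [gE] at h
    obtain ⟨h1, h2⟩ := h
    ext <;> omega
  · rintro ⟨⟨m, n⟩, ⟨j, hj⟩⟩
    refine ⟨(m + j, j), ?_⟩
    rw [Subtype.ext_iff, Prod.ext_iff]
    simp only [gE]
    omega

def gO : ℤ × ℤ → (evenSetᶜ : Set (ℤ × ℤ)) :=
  fun x => ⟨(x.1 - x.2, 2 * x.2 + 1), by
    simp only [evenSet, Set.mem_compl_iff, Set.mem_setOf_eq, Int.even_iff]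
    omega⟩

lemma gO_bij : Function.Bijective gO := by
  constructor
  · rintro ⟨a1, a2⟩ ⟨b1, b2⟩ h
    rw [Subtype.ext_iff, Prod.ext_iff] at h
    simp only [gO] at h
    obtain ⟨h1, h2⟩ := h
    ext <;> omega
  · rintro ⟨⟨m, n⟩, hn⟩
    simp only [evenSet, Set.mem_compl_iff, Set.mem_setOf_eq, Int.even_iff] at hn
    refine ⟨(m + (n-1)/2, (n-1)/2), ?_⟩
    rw [Subtype.ext_iff, Prod.ext_iff]
    simp only [gO]
    omega

lemma tsum_prod_mul {g h : ℤ → ℝ} (hg : Summable g) (hh : Summable h)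
    (hg0 : ∀ n, 0 ≤ g n) (hh0 : ∀ n, 0 ≤ h n) :
    ∑' p : ℤ × ℤ, g p.1 * h p.2 = (∑' n, g n) * (∑' n, h n) := by
  rw [Summable.tsum_prod (hg.mul_of_nonneg hh hg0 hh0)]
  simp_rw [tsum_mul_left, tsum_mul_right]

lemma key (c : ℝ) (hc : 0 < c) :
    ∑' p : ℤ × ℤ, rexp (-c * ((p.1 : ℝ) ^ 2 + (p.1 : ℝ) * (p.2 : ℝ) + (p.2 : ℝ) ^ 2))
      = (∑' n : ℤ, rexp (-c * (n : ℝ) ^ 2)) * (∑' n : ℤ, rexp (-(3*c) * (n : ℝ) ^ 2))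
        + (∑' n : ℤ, rexp (-c * ((n : ℝ) + 1/2) ^ 2))
          * (∑' n : ℤ, rexp (-(3*c) * ((n : ℝ) + 1/2) ^ 2)) := by
  have hg : Summable fun n : ℤ => rexp (-(c/2) * (n : ℝ) ^ 2) := by
    simpa using summable_int_exp (c/2) 0 (half_pos hc)
  have hfs : Summable
      (fun p : ℤ × ℤ => rexp (-c * ((p.1 : ℝ) ^ 2 + (p.1 : ℝ) * (p.2 : ℝ) + (p.2 : ℝ) ^ 2))) := by
    refine Summable.of_nonneg_of_le (fun p => (Real.exp_pos _).le) (fun p => ?_)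
      (hg.mul_of_nonneg hg (fun n => (Real.exp_pos _).le) (fun n => (Real.exp_pos _).le))
    rw [← Real.exp_add]
    apply Real.exp_le_exp.2
    nlinarith [sq_nonneg ((p.1 : ℝ) + (p.2 : ℝ))]
  rw [← Summable.tsum_add_tsum_compl (s := evenSet) (hfs.subtype _) (hfs.subtype _)]
  congr 1
  · rw [← (Equiv.ofBijective gE gE_bij).tsum_eq]
    have heq : ∀ y : ℤ × ℤ,
        rexp (-c * (((((Equiv.ofBijective gE gE_bij) y : evenSet) : ℤ × ℤ).1 : ℝ) ^ 2
          + ((((Equiv.ofBijective gE gE_bij) y : evenSet) : ℤ × ℤ).1 : ℝ)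
            * ((((Equiv.ofBijective gE gE_bij) y : evenSet) : ℤ × ℤ).2 : ℝ)
          + ((((Equiv.ofBijective gE gE_bij) y : evenSet) : ℤ × ℤ).2 : ℝ) ^ 2))
        = rexp (-c * (y.1 : ℝ) ^ 2) * rexp (-(3*c) * (y.2 : ℝ) ^ 2) := by
      intro y
      have h1 : (((Equiv.ofBijective gE gE_bij) y : evenSet) : ℤ × ℤ) = (y.1 - y.2, 2 * y.2) :=
        rfl
      rw [h1, ← Real.exp_add]
      congr 1
      push_cast
      ring
    have hsa : Summable (fun n : ℤ => rexp (-c * (n : ℝ) ^ 2)) := by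
      apply (summable_int_exp c 0 hc).congr
      intro n; norm_num
    have hsb : Summable (fun n : ℤ => rexp (-(3*c) * (n : ℝ) ^ 2)) := by
      apply (summable_int_exp (3*c) 0 (by linarith)).congr
      intro n; norm_num
    rw [tsum_congr heq,
      tsum_prod_mul hsa hsb (fun n => (Real.exp_pos _).le) (fun n => (Real.exp_pos _).le)]
  · rw [← (Equiv.ofBijective gO gO_bij).tsum_eq]
    have heq : ∀ y : ℤ × ℤ,
        rexp (-c * (((((Equiv.ofBijective gO gO_bij) y : (evenSetᶜ : Set (ℤ × ℤ))) : ℤ × ℤ).1 : ℝ) ^ 2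
          + ((((Equiv.ofBijective gO gO_bij) y : (evenSetᶜ : Set (ℤ × ℤ))) : ℤ × ℤ).1 : ℝ)
            * ((((Equiv.ofBijective gO gO_bij) y : (evenSetᶜ : Set (ℤ × ℤ))) : ℤ × ℤ).2 : ℝ)
          + ((((Equiv.ofBijective gO gO_bij) y : (evenSetᶜ : Set (ℤ × ℤ))) : ℤ × ℤ).2 : ℝ) ^ 2))
        = rexp (-c * ((y.1 : ℝ) + 1/2) ^ 2) * rexp (-(3*c) * ((y.2 : ℝ) + 1/2) ^ 2) := by
      intro y
      have h1 : (((Equiv.ofBijective gO gO_bij) y : (evenSetᶜ : Set (ℤ × ℤ))) : ℤ × ℤ)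
          = (y.1 - y.2, 2 * y.2 + 1) := rfl
      rw [h1, ← Real.exp_add]
      congr 1
      push_cast
      ring
    rw [tsum_congr heq,
      tsum_prod_mul (summable_int_exp c (1/2) hc) (summable_int_exp (3*c) (1/2) (by linarith))
        (fun n => (Real.exp_pos _).le) (fun n => (Real.exp_pos _).le)]

end CubicThetaAux

open CubicThetaAux

theorem cubicTheta_ge_near_one :
    ∃ q₀ ∈ Set.Ioo (0 : ℝ) 1, ∀ q ∈ Set.Ioo q₀ 1,
      2 * π / (Real.sqrt 3 * Real.log (1 / q)) ≤ cubicTheta q := by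
  refine ⟨1/2, ⟨by norm_num, by norm_num⟩, fun q hq => ?_⟩
  obtain ⟨hq0', hq1⟩ := hq
  have hq0 : 0 < q := lt_trans (by norm_num) hq0'
  set c := Real.log (1/q) with hcdef
  have hc : 0 < c := Real.log_pos (by rw [lt_div_iff₀ hq0]; linarith)
  have h3c : (0:ℝ) < 3 * c := by linarith
  have hlogq : Real.log q = -c := by rw [hcdef, one_div, Real.log_inv, neg_neg]
  have hA : cubicTheta q
      = ∑' p : ℤ × ℤ, rexp (-c * ((p.1 : ℝ) ^ 2 + (p.1 : ℝ) * (p.2 : ℝ) + (p.2 : ℝ) ^ 2)) := by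
    unfold cubicTheta
    apply tsum_congr
    intro p
    rw [← Real.rpow_intCast q, Real.rpow_def_of_pos hq0, hlogq]
    congr 1
    push_cast
    ring
  rw [hA, key c hc, theta0_eq hc, theta0_eq h3c, thetah_eq hc, thetah_eq h3c]
  set s1 := Real.sqrt (π / c) with hs1def
  set s2 := Real.sqrt (π / (3*c)) with hs2def
  set A := ∑' n : ℤ, rexp (-(π^2/c) * (n : ℝ) ^ 2) with hAdef
  set A' := ∑' n : ℤ, (-1:ℝ) ^ n * rexp (-(π^2/c) * (n : ℝ) ^ 2) with hA'def
  set B := ∑' n : ℤ, rexp (-(π^2/(3*c)) * (n : ℝ) ^ 2) with hBdef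
  set B' := ∑' n : ℤ, (-1:ℝ) ^ n * rexp (-(π^2/(3*c)) * (n : ℝ) ^ 2) with hB'def
  have hs1 : 0 < s1 := Real.sqrt_pos.mpr (div_pos pi_pos hc)
  have hs2 : 0 < s2 := Real.sqrt_pos.mpr (div_pos pi_pos h3c)
  -- summability facts
  have hAsum : Summable (fun n : ℤ => rexp (-(π^2/c) * (n : ℝ) ^ 2)) := by
    apply (summable_int_exp (π^2/c) 0 (div_pos (by positivity) hc)).congr
    intro n; norm_num
  have hBsum : Summable (fun n : ℤ => rexp (-(π^2/(3*c)) * (n : ℝ) ^ 2)) := by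
    apply (summable_int_exp (π^2/(3*c)) 0 (div_pos (by positivity) h3c)).congr
    intro n; norm_num
  have habs : ∀ j : ℤ, |(-1:ℝ) ^ j| = 1 := by
    intro j
    rcases Int.even_or_odd j with h | h
    · rw [h.neg_one_zpow, abs_one]
    · rw [h.neg_one_zpow, abs_neg, abs_one]
  have hA'sum : Summable (fun n : ℤ => (-1:ℝ) ^ n * rexp (-(π^2/c) * (n : ℝ) ^ 2)) := by
    refine Summable.of_norm (hAsum.congr fun n => ?_)
    rw [Real.norm_eq_abs, abs_mul, habs, one_mul, Real.abs_exp]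
  have hB'sum : Summable (fun n : ℤ => (-1:ℝ) ^ n * rexp (-(π^2/(3*c)) * (n : ℝ) ^ 2)) := by
    refine Summable.of_norm (hBsum.congr fun n => ?_)
    rw [Real.norm_eq_abs, abs_mul, habs, one_mul, Real.abs_exp]
  -- sign facts about (-1)^n
  have hpm : ∀ j : ℤ, (-1:ℝ) ^ j = 1 ∨ (-1:ℝ) ^ j = -1 := by
    intro j
    rcases Int.even_or_odd j with he | ho
    · left; exact he.neg_one_zpow
    · right; exact ho.neg_one_zpow
  have key2 : ∀ (u : ℝ) (husum : Summable (fun n : ℤ => rexp (-u * (n : ℝ) ^ 2)))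
      (hu'sum : Summable (fun n : ℤ => (-1:ℝ) ^ n * rexp (-u * (n : ℝ) ^ 2))),
      2 ≤ (∑' n : ℤ, rexp (-u * (n : ℝ) ^ 2))
          + (∑' n : ℤ, (-1:ℝ) ^ n * rexp (-u * (n : ℝ) ^ 2))
      ∧ 0 ≤ (∑' n : ℤ, rexp (-u * (n : ℝ) ^ 2))
          - (∑' n : ℤ, (-1:ℝ) ^ n * rexp (-u * (n : ℝ) ^ 2)) := by
    intro u husum hu'sum
    constructor
    · rw [← Summable.tsum_add husum hu'sum]
      have h0 : (2:ℝ) = rexp (-u * ((0:ℤ) : ℝ) ^ 2) + (-1:ℝ) ^ (0:ℤ) * rexp (-u * ((0:ℤ) : ℝ) ^ 2) := by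
        norm_num
      rw [h0]
      refine Summable.le_tsum (husum.add hu'sum) 0 (fun j _ => ?_)
      rcases hpm j with h | h <;> rw [h] <;> nlinarith [Real.exp_pos (-u * (j : ℝ) ^ 2)]
    · rw [← Summable.tsum_sub husum hu'sum]
      refine tsum_nonneg (fun j => ?_)
      rcases hpm j with h | h <;> rw [h] <;> nlinarith [Real.exp_pos (-u * (j : ℝ) ^ 2)]
  obtain ⟨hA2, hAd⟩ := key2 (π^2/c) hAsum hA'sum
  obtain ⟨hB2, hBd⟩ := key2 (π^2/(3*c)) hBsum hB'sum
  have hS : 2 ≤ A * B + A' * B' := by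
    nlinarith [mul_le_mul hA2 hB2 (by norm_num : (0:ℝ) ≤ 2) (by linarith : (0:ℝ) ≤ A + A'),
      mul_nonneg hAd hBd]
  have hK : s1 * s2 = π / (Real.sqrt 3 * c) := by
    rw [hs1def, hs2def, ← Real.sqrt_mul (by positivity) _]
    rw [show π / c * (π / (3*c)) = (π / (Real.sqrt 3 * c)) ^ 2 by
      have h3 : Real.sqrt 3 ^ 2 = 3 := Real.sq_sqrt (by norm_num)
      rw [div_pow, mul_pow, h3]
      field_simp]
    exact Real.sqrt_sq (by positivity)
  calc 2 * π / (Real.sqrt 3 * c) = (s1 * s2) * 2 := by rw [hK]; ring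
    _ ≤ (s1 * s2) * (A * B + A' * B') := by
        apply mul_le_mul_of_nonneg_left hS (by positivity)
    _ = s1 * A * (s2 * B) + s1 * A' * (s2 * B') := by ring
end

section
/- For all sufficiently large c > 0, L( exp(−2π/(√3·c)) ) ≥ c, where L(q) = ∑_{m,n ∈ ℤ} q^{m²+mn+n²}. -/
open Real

namespace CubicThetaAux

/-- The classical theta-type sum `∑_{n ∈ ℤ} exp(-s n²)`. -/
noncomputable def F (s : ℝ) : ℝ := ∑' n : ℤ, Real.exp (-s * (n : ℝ) ^ 2)

lemma summable_nat {s : ℝ} (hs : 0 < s) :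
    Summable fun n : ℕ => Real.exp (-s * (n : ℝ) ^ 2) := by
  refine Summable.of_nonneg_of_le (fun n => (Real.exp_pos _).le) (fun n => ?_)
    (summable_geometric_of_lt_one (Real.exp_pos (-s)).le
      (Real.exp_lt_one_iff.mpr (by linarith)))
  rw [← Real.exp_nat_mul]
  apply Real.exp_le_exp.mpr
  have h1 : (n : ℝ) ≤ (n : ℝ) ^ 2 := by
    exact_mod_cast Nat.cast_le.mpr (Nat.le_self_pow two_ne_zero n)
  nlinarith [mul_le_mul_of_nonneg_left h1 hs.le]

lemma summable_F {s : ℝ} (hs : 0 < s) :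
    Summable fun n : ℤ => Real.exp (-s * (n : ℝ) ^ 2) := by
  refine Summable.of_nat_of_neg ?_ ?_ <;>
    · apply (summable_nat hs).congr
      intro n; push_cast; ring_nf

lemma one_le_F {s : ℝ} (hs : 0 < s) : 1 ≤ F s := by
  have h := Summable.le_tsum (summable_F hs) 0 (fun n _ => (Real.exp_pos _).le)
  simpa [F, neg_mul] using h

lemma F_transform {s : ℝ} (hs : 0 < s) : F s = Real.sqrt (π / s) * F (π ^ 2 / s) := by
  have hπ := Real.pi_pos
  have h := Real.tsum_exp_neg_mul_int_sq (a := s / π) (by positivity)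
  have h1 : ∀ n : ℤ, -π * (s / π) * (n : ℝ) ^ 2 = -s * (n : ℝ) ^ 2 := by
    intro n; field_simp
  have hc : -π / (s / π) = -(π ^ 2 / s) := by rw [div_div_eq_mul_div]; ring
  have h2 : ∀ n : ℤ, -π / (s / π) * (n : ℝ) ^ 2 = -(π ^ 2 / s) * (n : ℝ) ^ 2 := by
    intro n; rw [hc]
  simp only [h1, h2] at h
  rw [F, h, F]
  congr 1
  rw [← Real.sqrt_eq_rpow, one_div, ← Real.sqrt_inv, inv_div]

lemma two_F_le {s : ℝ} (hs : 1 ≤ s) : 2 * F (4 * s) ≤ F s + 1 := by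
  have hs0 : 0 < s := lt_of_lt_of_le one_pos hs
  have h4 : (0:ℝ) < 4 * s := by linarith
  have hsum1 : Summable fun n : ℤ => 2 * Real.exp (-(4 * s) * (n : ℝ) ^ 2) :=
    (summable_F h4).mul_left 2
  have hind : Summable fun n : ℤ => (if n = 0 then (1:ℝ) else 0) := by
    exact (hasSum_ite_eq (0 : ℤ) (1:ℝ)).summable.congr (by
      intro n; simp [eq_comm])
  have hsum2 : Summable fun n : ℤ =>
      Real.exp (-s * (n : ℝ) ^ 2) + (if n = 0 then (1:ℝ) else 0) :=
    (summable_F hs0).add hind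
  have hle : ∀ n : ℤ, 2 * Real.exp (-(4 * s) * (n : ℝ) ^ 2) ≤
      Real.exp (-s * (n : ℝ) ^ 2) + (if n = 0 then (1:ℝ) else 0) := by
    intro n
    by_cases hn : n = 0
    · subst hn; norm_num
    · simp only [hn, if_false, add_zero]
      have h0 : (1:ℤ) ≤ n ^ 2 := by
        rcases lt_or_gt_of_ne hn with h | h
        · nlinarith
        · nlinarith
      have hn1 : (1:ℝ) ≤ (n : ℝ) ^ 2 := by exact_mod_cast h0
      have h2 : 2 * Real.exp (-(3 * s * (n:ℝ)^2)) ≤ 1 := by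
        rw [Real.exp_neg, mul_inv_le_iff₀ (Real.exp_pos _), one_mul]
        have := Real.add_one_le_exp (3 * s * (n:ℝ)^2)
        nlinarith
      have key : (-(4 * s) * (n:ℝ)^2) = (-(3 * s * (n:ℝ)^2)) + (-s * (n:ℝ)^2) := by ring
      calc 2 * Real.exp (-(4 * s) * (n:ℝ)^2)
          = 2 * Real.exp (-(3 * s * (n:ℝ)^2)) * Real.exp (-s * (n:ℝ)^2) := by
            rw [key, Real.exp_add]; ring
        _ ≤ 1 * Real.exp (-s * (n:ℝ)^2) :=
            mul_le_mul_of_nonneg_right h2 (Real.exp_pos _).le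
        _ = Real.exp (-s * (n:ℝ)^2) := one_mul _
  have hfin := Summable.tsum_le_tsum hle hsum1 hsum2
  rw [tsum_mul_left, Summable.tsum_add (summable_F hs0) hind] at hfin
  simpa [F, tsum_ite_eq] using hfin

lemma tsum_int_even_odd {f : ℤ → ℝ} (hf : Summable f) :
    ∑' k : ℤ, f k = (∑' j : ℤ, f (2 * j)) + ∑' j : ℤ, f (2 * j + 1) := by
  have h2 : Summable fun p : ℤ × Fin 2 => f ((Int.divModEquiv 2).symm p) :=
    ((Int.divModEquiv 2).symm.summable_iff).mpr hf
  rw [← (Int.divModEquiv 2).symm.tsum_eq f, Summable.tsum_prod h2]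
  have hinner : ∀ j : ℤ, (∑' r : Fin 2, f ((Int.divModEquiv 2).symm (j, r)))
      = f (2 * j) + f (2 * j + 1) := by
    intro j
    rw [tsum_fintype, Fin.sum_univ_two]
    simp only [Int.divModEquiv_symm_apply]
    norm_num [mul_comm]
  rw [tsum_congr hinner]
  refine Summable.tsum_add (hf.comp_injective fun a b h => by omega)
    (hf.comp_injective fun a b h => by omega)

/-- The odd part of a theta series. -/
lemma odd_part {u : ℝ} (hu : 0 < u) :
    ∑' j : ℤ, Real.exp (-u * (2 * (j : ℝ) + 1) ^ 2) = F u - F (4 * u) := by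
  have h := tsum_int_even_odd (f := fun n : ℤ => Real.exp (-u * (n : ℝ) ^ 2)) (summable_F hu)
  have he : (∑' j : ℤ, Real.exp (-u * ((2 * j : ℤ) : ℝ) ^ 2)) = F (4 * u) := by
    refine tsum_congr fun j => ?_
    push_cast
    ring_nf
  have ho : (∑' j : ℤ, Real.exp (-u * ((2 * j + 1 : ℤ) : ℝ) ^ 2))
      = ∑' j : ℤ, Real.exp (-u * (2 * (j : ℝ) + 1) ^ 2) := by
    refine tsum_congr fun j => ?_
    push_cast
    ring_nf
  rw [he, ho] at h
  rw [show (F u) = (∑' n : ℤ, Real.exp (-u * (n : ℝ) ^ 2)) from rfl, h]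
  ring

/-- Shifted Gaussian sums: integer shift. -/
lemma shift_even {t : ℝ} (j : ℤ) :
    ∑' b : ℤ, Real.exp (-t * ((b : ℝ) + (j : ℝ)) ^ 2) = F t := by
  have h := (Equiv.addRight j).tsum_eq (fun b : ℤ => Real.exp (-t * (b : ℝ) ^ 2))
  refine Eq.trans (tsum_congr fun b => ?_) h
  simp only [Equiv.coe_addRight]
  push_cast
  ring_nf

lemma shift_odd {t : ℝ} (ht : 0 < t) (j : ℤ) :
    ∑' b : ℤ, Real.exp (-t * ((b : ℝ) + (j : ℝ) + 1/2) ^ 2) = F (t/4) - F t := by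
  have h := (Equiv.addRight j).tsum_eq
    (fun b : ℤ => Real.exp (-t * ((b : ℝ) + 1/2) ^ 2))
  simp only [Equiv.coe_addRight] at h
  have h1 : ∑' b : ℤ, Real.exp (-t * ((b : ℝ) + (j : ℝ) + 1/2) ^ 2)
      = ∑' b : ℤ, Real.exp (-t * ((b : ℝ) + 1/2) ^ 2) := by
    rw [← h]
    refine tsum_congr fun b => ?_
    push_cast
    ring_nf
  have h2 : ∑' b : ℤ, Real.exp (-t * ((b : ℝ) + 1/2) ^ 2)
      = ∑' b : ℤ, Real.exp (-(t/4) * (2 * (b : ℝ) + 1) ^ 2) := by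
    refine tsum_congr fun b => ?_
    congr 1
    ring
  have h3 := odd_part (u := t/4) (by linarith)
  rw [h1, h2, h3, show 4*(t/4) = t by ring]

lemma summable_cubic {t : ℝ} (ht : 0 < t) :
    Summable fun p : ℤ × ℤ =>
      Real.exp (-t * ((p.1 : ℝ) ^ 2 + (p.1 : ℝ) * (p.2 : ℝ) + (p.2 : ℝ) ^ 2)) := by
  have ht2 : (0:ℝ) < t/2 := by linarith
  refine Summable.of_nonneg_of_le (fun p => (Real.exp_pos _).le) (fun p => ?_)
    ((summable_F ht2).mul_of_nonneg (summable_F ht2)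
      (fun n => (Real.exp_pos _).le) (fun n => (Real.exp_pos _).le))
  rw [← Real.exp_add]
  apply Real.exp_le_exp.mpr
  nlinarith [sq_nonneg ((p.1 : ℝ) + (p.2 : ℝ)), sq_nonneg ((p.1 : ℝ) - (p.2 : ℝ))]

lemma key_decomp {t : ℝ} (ht : 0 < t) :
    (∑' p : ℤ × ℤ,
      Real.exp (-t * ((p.1 : ℝ) ^ 2 + (p.1 : ℝ) * (p.2 : ℝ) + (p.2 : ℝ) ^ 2)))
      = F (3*t) * F t + (F (3*t/4) - F (3*t)) * (F (t/4) - F t) := by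
  have ht34 : (0:ℝ) < 3*t/4 := by linarith
  rw [Summable.tsum_prod (summable_cubic ht)]
  have step1 : ∀ a : ℤ,
      (∑' b : ℤ, Real.exp (-t * ((a : ℝ) ^ 2 + (a : ℝ) * (b : ℝ) + (b : ℝ) ^ 2)))
      = Real.exp (-(3*t/4) * (a : ℝ) ^ 2) *
          ∑' b : ℤ, Real.exp (-t * ((b : ℝ) + (a : ℝ)/2) ^ 2) := by
    intro a
    rw [← tsum_mul_left]
    refine tsum_congr fun b => ?_
    rw [← Real.exp_add]
    congr 1
    ring
  rw [tsum_congr step1]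
  have houter : Summable fun a : ℤ => Real.exp (-(3*t/4) * (a : ℝ) ^ 2) *
      ∑' b : ℤ, Real.exp (-t * ((b : ℝ) + (a : ℝ)/2) ^ 2) := by
    refine (summable_congr step1).mp ?_
    exact (summable_cubic ht).prod
  rw [tsum_int_even_odd houter]
  have heven : (∑' j : ℤ, Real.exp (-(3*t/4) * ((2*j : ℤ) : ℝ) ^ 2) *
      ∑' b : ℤ, Real.exp (-t * ((b : ℝ) + ((2*j : ℤ) : ℝ)/2) ^ 2)) = F (3*t) * F t := by
    have hpt : ∀ j : ℤ, Real.exp (-(3*t/4) * ((2*j : ℤ) : ℝ) ^ 2) *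
        (∑' b : ℤ, Real.exp (-t * ((b : ℝ) + ((2*j : ℤ) : ℝ)/2) ^ 2))
        = Real.exp (-(3*t) * (j:ℝ) ^ 2) * F t := by
      intro j
      have e1 : ∑' b : ℤ, Real.exp (-t * ((b : ℝ) + ((2*j : ℤ) : ℝ)/2) ^ 2)
          = ∑' b : ℤ, Real.exp (-t * ((b : ℝ) + (j:ℝ)) ^ 2) := by
        refine tsum_congr fun b => ?_
        push_cast
        ring_nf
      rw [e1, shift_even]
      congr 2
      push_cast
      ring
    rw [tsum_congr hpt, tsum_mul_right]
    rfl
  have hodd : (∑' j : ℤ, Real.exp (-(3*t/4) * ((2*j+1 : ℤ) : ℝ) ^ 2) *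
      ∑' b : ℤ, Real.exp (-t * ((b : ℝ) + ((2*j+1 : ℤ) : ℝ)/2) ^ 2))
      = (F (3*t/4) - F (3*t)) * (F (t/4) - F t) := by
    have hpt : ∀ j : ℤ, Real.exp (-(3*t/4) * ((2*j+1 : ℤ) : ℝ) ^ 2) *
        (∑' b : ℤ, Real.exp (-t * ((b : ℝ) + ((2*j+1 : ℤ) : ℝ)/2) ^ 2))
        = Real.exp (-(3*t/4) * (2*(j:ℝ)+1) ^ 2) * (F (t/4) - F t) := by
      intro j
      have e1 : ∑' b : ℤ, Real.exp (-t * ((b : ℝ) + ((2*j+1 : ℤ) : ℝ)/2) ^ 2)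
          = ∑' b : ℤ, Real.exp (-t * ((b : ℝ) + (j:ℝ) + 1/2) ^ 2) := by
        refine tsum_congr fun b => ?_
        push_cast
        ring_nf
      rw [e1, shift_odd ht]
      congr 2
      push_cast
      ring
    rw [tsum_congr hpt, tsum_mul_right]
    have h4 := odd_part (u := 3*t/4) ht34
    rw [show 4*(3*t/4) = 3*t by ring] at h4
    rw [h4]
  rw [heven, hodd]

lemma bracket_ineq {B D X Y : ℝ} (hB : 1 ≤ B) (hD : 1 ≤ D)
    (hX1 : X ≤ 1) (hX2 : 2 - B ≤ X) (hY1 : Y ≤ 1) (hY2 : 2 - D ≤ Y) :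
    2 ≤ D * B + Y * X := by
  nlinarith [mul_nonneg (by linarith : (0:ℝ) ≤ B - 2 + X) (by linarith : (0:ℝ) ≤ D - 2 + Y),
    mul_nonneg (by linarith : (0:ℝ) ≤ B - 2 + X) (by linarith : (0:ℝ) ≤ 1 - Y),
    mul_nonneg (by linarith : (0:ℝ) ≤ D - 2 + Y) (by linarith : (0:ℝ) ≤ 1 - X),
    mul_nonneg (by linarith : (0:ℝ) ≤ 1 - X) (by linarith : (0:ℝ) ≤ 1 - Y)]

lemma exp_zpow (x : ℝ) (k : ℤ) : Real.exp x ^ k = Real.exp (x * k) := by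
  rw [← Real.rpow_intCast (Real.exp x) k, Real.rpow_def_of_pos (Real.exp_pos x), Real.log_exp]

end CubicThetaAux

set_option maxHeartbeats 1000000 in
open CubicThetaAux in
theorem cubicTheta_ge_self_eventually :
    ∃ c₀ : ℝ, 0 < c₀ ∧ ∀ c ≥ c₀,
      c ≤ cubicTheta (Real.exp (-2 * π / (Real.sqrt 3 * c))) := by
  refine ⟨2, by norm_num, fun c hc => ?_⟩
  have hc0 : (0:ℝ) < c := by linarith
  have h3 : (0:ℝ) < Real.sqrt 3 := Real.sqrt_pos.mpr (by norm_num)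
  have h3one : (1:ℝ) ≤ Real.sqrt 3 := by
    rw [show (1:ℝ) = Real.sqrt 1 by simp]
    exact Real.sqrt_le_sqrt (by norm_num)
  have hπ := Real.pi_pos
  set t : ℝ := 2 * π / (Real.sqrt 3 * c) with htdef
  have ht : 0 < t := by positivity
  have hq : Real.exp (-2 * π / (Real.sqrt 3 * c)) = Real.exp (-t) := by
    rw [htdef]; congr 1; ring
  rw [hq]
  have hct : cubicTheta (Real.exp (-t)) = ∑' p : ℤ × ℤ,
      Real.exp (-t * ((p.1 : ℝ) ^ 2 + (p.1:ℝ) * (p.2:ℝ) + (p.2:ℝ) ^ 2)) := by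
    unfold cubicTheta
    refine tsum_congr fun p => ?_
    rw [exp_zpow]
    congr 1
    push_cast
    ring
  rw [hct, key_decomp ht]
  set u : ℝ := π ^ 2 / t with hudef
  have hu : 0 < u := by positivity
  have hu_eq : u = π * Real.sqrt 3 * c / 2 := by
    rw [hudef, htdef]
    field_simp
  have hpi3 := Real.pi_gt_three
  have hps : (3:ℝ) ≤ π * Real.sqrt 3 := by
    nlinarith [mul_le_mul_of_nonneg_left h3one hπ.le]
  have hps6 : (6:ℝ) ≤ π * Real.sqrt 3 * c := by
    nlinarith [mul_le_mul_of_nonneg_left hc (by positivity : (0:ℝ) ≤ π * Real.sqrt 3)]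
  have hu3 : (1:ℝ) ≤ u / 3 := by
    rw [hu_eq]
    linarith
  have hu1 : (1:ℝ) ≤ u := by linarith
  -- transformation formulas
  have hsqrt4 : Real.sqrt 4 = 2 := by
    rw [show (4:ℝ) = 2^2 by norm_num, Real.sqrt_sq (by norm_num)]
  have hFt : F t = Real.sqrt (π/t) * F u := F_transform ht
  have hFt4 : F (t/4) = 2 * Real.sqrt (π/t) * F (4*u) := by
    have h := F_transform (show (0:ℝ) < t/4 by linarith)
    rw [show π / (t/4) = 4 * (π/t) by field_simp,
      show π^2 / (t/4) = 4*u by rw [hudef]; field_simp,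
      Real.sqrt_mul (by norm_num : (0:ℝ) ≤ 4), hsqrt4] at h
    exact h
  have hF3t : F (3*t) = Real.sqrt (π/(3*t)) * F (u/3) := by
    have h := F_transform (show (0:ℝ) < 3*t by linarith)
    rw [show π^2 / (3*t) = u/3 by rw [hudef]; ring] at h
    exact h
  have hF3t4 : F (3*t/4) = 2 * Real.sqrt (π/(3*t)) * F (4*(u/3)) := by
    have h := F_transform (show (0:ℝ) < 3*t/4 by linarith)
    rw [show π / (3*t/4) = 4 * (π/(3*t)) by field_simp,
      show π^2 / (3*t/4) = 4*(u/3) by rw [hudef]; field_simp,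
      Real.sqrt_mul (by norm_num : (0:ℝ) ≤ 4), hsqrt4] at h
    exact h
  rw [hFt, hFt4, hF3t, hF3t4]
  set k1 : ℝ := Real.sqrt (π/t) with hk1def
  set k2 : ℝ := Real.sqrt (π/(3*t)) with hk2def
  have hk1 : 0 < k1 := Real.sqrt_pos.mpr (by positivity)
  have hk2 : 0 < k2 := Real.sqrt_pos.mpr (by positivity)
  -- value of k1 * k2
  have hpt : π / t = Real.sqrt 3 * c / 2 := by
    rw [htdef]; field_simp
  have hpt3 : π / (3*t) = Real.sqrt 3 * c / 6 := by
    rw [htdef]; field_simp; ring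
  have h3sq : Real.sqrt 3 ^ 2 = 3 := Real.sq_sqrt (by norm_num)
  have harg : (π/t) * (π/(3*t)) = (c/2)^2 := by
    rw [hpt, hpt3]
    linear_combination (c^2/12) * h3sq
  have hk12 : k1 * k2 = c / 2 := by
    rw [hk1def, hk2def, ← Real.sqrt_mul (by positivity), harg,
      Real.sqrt_sq (by linarith : (0:ℝ) ≤ c/2)]
  -- the bracket inequality
  have hA : 1 ≤ F (4*u) := one_le_F (by positivity)
  have hB : 1 ≤ F u := one_le_F hu
  have hC : 1 ≤ F (4*(u/3)) := one_le_F (by positivity)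
  have hD : 1 ≤ F (u/3) := one_le_F (by positivity)
  have hX1 : 2 * F (4*u) - F u ≤ 1 := by
    have := two_F_le (s := u) hu1
    linarith
  have hY1 : 2 * F (4*(u/3)) - F (u/3) ≤ 1 := by
    have := two_F_le (s := u/3) hu3
    linarith
  have hbr : 2 ≤ F (u/3) * F u +
      (2 * F (4*(u/3)) - F (u/3)) * (2 * F (4*u) - F u) :=
    bracket_ineq hB hD hX1 (by linarith) hY1 (by linarith)
  have hrw : k2 * F (u/3) * (k1 * F u) +
      (2 * k2 * F (4*(u/3)) - k2 * F (u/3)) * (2 * k1 * F (4*u) - k1 * F u)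
      = (k1 * k2) * (F (u/3) * F u +
        (2 * F (4*(u/3)) - F (u/3)) * (2 * F (4*u) - F u)) := by ring
  rw [hrw, hk12]
  nlinarith [hbr, hc0]
end
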